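/- Let q be a real number with q > 1 and let N be a nonnegative integer. For integers 0 ≤ i < m define C(m,i) = −[m choose i]_q · ∏_{k=i+1}^{m} (q^k + 1). Suppose X : ℕ → ℝ satisfies, for every m ≥ 0, the recursion X(m) = q^{(2m+1)N} + Σ_{i=0}^{m−1} C(m,i)·X(i). Then for every m ≥ 0 one has the closed form X(m) = Σ_{i=0}^{m} (−1)^{m−i} · q^{(m−i)(m−i−1)/2} · [m choose i]_q · (∏_{k=i+1}^{m} (q^k + 1)) · q^{(2i+1)N}. -/

import Mathlib

open Finset

/-- The Gaussian binomial coefficient `[n choose k]_q` for a real base `q`. -/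
noncomputable def gbinom (q : ℝ) (n k : ℕ) : ℝ :=
  ∏ j ∈ Finset.Icc 1 k, (q ^ (n - k + j) - 1) / (q ^ j - 1)

noncomputable def ff (q : ℝ) (n : ℕ) : ℝ := ∏ j ∈ Finset.Icc 1 n, (q ^ j - 1)

variable {q : ℝ}

lemma ff_pos (hq : 1 < q) (n : ℕ) : 0 < ff q n := by
  apply Finset.prod_pos
  intro j hj
  have hj1 : 1 ≤ j := (Finset.mem_Icc.mp hj).1
  have : 1 < q ^ j := one_lt_pow₀ hq (by omega)
  linarith

lemma ff_ne (hq : 1 < q) (n : ℕ) : ff q n ≠ 0 := (ff_pos hq n).ne'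

lemma ff_zero : ff q 0 = 1 := by simp [ff]

lemma ff_succ (n : ℕ) : ff q (n + 1) = ff q n * (q ^ (n + 1) - 1) :=
  Finset.prod_Icc_succ_top (by omega) _

lemma ff_shift (d : ℕ) : ∀ k : ℕ, ff q d * ∏ j ∈ Finset.Icc 1 k, (q ^ (d + j) - 1) = ff q (d + k)
  | 0 => by simp [ff]
  | k + 1 => by
    rw [Finset.prod_Icc_succ_top (by omega : 1 ≤ k + 1), show d + (k + 1) = (d + k) + 1 from rfl,
      ff_succ, ← ff_shift d k]
    ring

lemma gbinom_eq (hq : 1 < q) {n k : ℕ} (h : k ≤ n) :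
    gbinom q n k = ff q n / (ff q k * ff q (n - k)) := by
  have h1 := ff_shift (q := q) (n - k) k
  rw [show n - k + k = n from by omega] at h1
  rw [gbinom, Finset.prod_div_distrib]
  have h2 : (∏ j ∈ Finset.Icc 1 k, (q ^ (n - k + j) - 1)) = ff q n / ff q (n - k) := by
    rw [eq_div_iff (ff_ne hq _), ← h1]; ring
  rw [h2, show (∏ j ∈ Finset.Icc 1 k, (q ^ j - 1)) = ff q k from rfl, div_div, mul_comm]

lemma gbinom_zero (n : ℕ) : gbinom q n 0 = 1 := by simp [gbinom]

lemma gbinom_self (hq : 1 < q) (n : ℕ) : gbinom q n n = 1 := by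
  rw [gbinom_eq hq le_rfl, Nat.sub_self, ff_zero]
  field_simp [ff_ne hq]

lemma pascal (hq : 1 < q) (a b : ℕ) :
    gbinom q (a + b + 2) (a + 1)
      = q ^ (a + 1) * gbinom q (a + b + 1) (a + 1) + gbinom q (a + b + 1) a := by
  rw [gbinom_eq hq (by omega), gbinom_eq hq (by omega), gbinom_eq hq (by omega),
    show a + b + 2 - (a + 1) = b + 1 from by omega,
    show a + b + 1 - (a + 1) = b from by omega,
    show a + b + 1 - a = b + 1 from by omega,
    show a + b + 2 = (a + b + 1) + 1 from rfl, ff_succ (a + b + 1), ff_succ a, ff_succ b]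
  have h1 := ff_ne hq (a + b + 1)
  have h2 := ff_ne hq a
  have h3 := ff_ne hq b
  have e1 : q ^ (a + 1) ≠ 1 := ne_of_gt (one_lt_pow₀ hq (by omega))
  have e2 : q ^ (b + 1) ≠ 1 := ne_of_gt (one_lt_pow₀ hq (by omega))
  field_simp [sub_ne_zero.mpr e1, sub_ne_zero.mpr e2]
  ring

/-- padded Gaussian binomial -/
noncomputable def gb (q : ℝ) (n k : ℕ) : ℝ := if k ≤ n then gbinom q n k else 0

lemma pascal' (hq : 1 < q) {n s : ℕ} (h : s ≤ n) :
    gb q (n + 1) (s + 1) = q ^ (s + 1) * gb q n (s + 1) + gb q n s := by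
  rcases lt_or_eq_of_le h with h' | h'
  · have hs : s + 1 ≤ n := h'
    rw [gb, gb, gb, if_pos (by omega), if_pos hs, if_pos h]
    obtain ⟨b, hb⟩ : ∃ b, n = s + b + 1 := ⟨n - s - 1, by omega⟩
    subst hb
    exact pascal hq s b
  · subst h'
    rw [gb, gb, gb, if_pos le_rfl, if_neg (by omega), if_pos le_rfl,
      gbinom_self hq, gbinom_self hq]
    ring

lemma tri_succ (s : ℕ) : (s + 1) * s / 2 = s * (s - 1) / 2 + s := by
  rcases s with _ | t
  · rfl
  · obtain ⟨a, ha⟩ : Even (t * (t + 1)) := Nat.even_mul_succ_self t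
    have h1 : (t + 1 + 1) * (t + 1) = (a + a) + 2 * (t + 1) := by rw [← ha]; ring
    have h2 : (t + 1) * (t + 1 - 1) = a + a := by
      rw [show t + 1 - 1 = t from rfl, mul_comm]; exact ha
    rw [h1, h2]
    omega

lemma alt_sum (hq : 1 < q) (r : ℕ) :
    ∑ s ∈ Finset.range (r + 2), (-1 : ℝ) ^ s * q ^ (s * (s - 1) / 2) * gb q (r + 1) s = 0 := by
  rw [Finset.sum_range_succ']
  simp only [Nat.add_sub_cancel]
  have hrw : ∀ s ∈ Finset.range (r + 1),
      (-1 : ℝ) ^ (s + 1) * q ^ ((s + 1) * s / 2) * gb q (r + 1) (s + 1)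
      = ((-1 : ℝ) ^ (s + 1) * q ^ (s * (s - 1) / 2 + s) * q ^ (s + 1) * gb q r (s + 1))
        + (-((-1 : ℝ) ^ s * q ^ (s * (s - 1) / 2 + s) * gb q r s)) := by
    intro s hs
    have hs' : s < r + 1 := Finset.mem_range.mp hs
    rw [pascal' hq (by omega : s ≤ r), tri_succ]
    ring
  rw [Finset.sum_congr rfl hrw, Finset.sum_add_distrib]
  set g : ℕ → ℝ := fun t => (-1 : ℝ) ^ t * q ^ (t * (t - 1) / 2 + t) * gb q r t with hg
  have hA : ∀ s ∈ Finset.range (r + 1),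
      (-1 : ℝ) ^ (s + 1) * q ^ (s * (s - 1) / 2 + s) * q ^ (s + 1) * gb q r (s + 1)
      = g (s + 1) := by
    intro s hs
    rw [hg]
    simp only [Nat.add_sub_cancel]
    rw [tri_succ]
    ring
  rw [Finset.sum_congr rfl hA]
  have hshift : ∑ s ∈ Finset.range (r + 1), g (s + 1)
      = (∑ s ∈ Finset.range (r + 2), g s) - g 0 := by
    rw [eq_sub_iff_add_eq, ← Finset.sum_range_succ']
  rw [hshift, Finset.sum_range_succ]
  have hg0 : g 0 = 1 := by simp [hg, gb, gbinom_zero]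
  have hgtop : g (r + 1) = 0 := by simp [hg, gb]
  have hB : ∀ s ∈ Finset.range (r + 1),
      (-((-1 : ℝ) ^ s * q ^ (s * (s - 1) / 2 + s) * gb q r s)) = -(g s) := by
    intro s _; rw [hg]
  rw [Finset.sum_congr rfl hB, Finset.sum_neg_distrib]
  rw [hg0, hgtop]
  have : (-1 : ℝ) ^ 0 * q ^ (0 * (0 - 1) / 2) * gb q (r + 1) 0 = 1 := by
    simp [gb, gbinom_zero]
  rw [this]
  ring

lemma comb (hq : 1 < q) {j i m : ℕ} (hji : j ≤ i) (him : i ≤ m) :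
    gbinom q m i * gbinom q i j = gbinom q m j * gbinom q (m - j) (i - j) := by
  rw [gbinom_eq hq him, gbinom_eq hq hji, gbinom_eq hq (le_trans hji him),
    gbinom_eq hq (by omega : i - j ≤ m - j), show m - j - (i - j) = m - i from by omega]
  field_simp [ff_ne hq]

lemma prodcomb {j i m : ℕ} (hji : j ≤ i) (him : i ≤ m) :
    (∏ k ∈ Finset.Icc (i + 1) m, (q ^ k + 1)) * (∏ k ∈ Finset.Icc (j + 1) i, (q ^ k + 1))
      = ∏ k ∈ Finset.Icc (j + 1) m, (q ^ k + 1) := by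
  rw [Finset.Icc_add_one_left_eq_Ioc, Finset.Icc_add_one_left_eq_Ioc, Finset.Icc_add_one_left_eq_Ioc, mul_comm]
  exact Finset.prod_Ioc_consecutive _ hji him

lemma alt_sum' (hq : 1 < q) {r : ℕ} (hr : 1 ≤ r) :
    ∑ s ∈ Finset.range r, (-1 : ℝ) ^ s * q ^ (s * (s - 1) / 2) * gbinom q r s
      = -((-1 : ℝ) ^ r * q ^ (r * (r - 1) / 2)) := by
  obtain ⟨t, rfl⟩ : ∃ t, r = t + 1 := ⟨r - 1, by omega⟩
  have h := alt_sum hq t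
  rw [Finset.sum_range_succ] at h
  have h2 : ∀ s ∈ Finset.range (t + 1),
      (-1 : ℝ) ^ s * q ^ (s * (s - 1) / 2) * gb q (t + 1) s
      = (-1 : ℝ) ^ s * q ^ (s * (s - 1) / 2) * gbinom q (t + 1) s := by
    intro s hs
    rw [gb, if_pos (by have := Finset.mem_range.mp hs; omega)]
  rw [Finset.sum_congr rfl h2, gb, if_pos le_rfl, gbinom_self hq, mul_one] at h
  linarith

lemma key (hq : 1 < q) (N m : ℕ) :
    q ^ ((2 * m + 1) * N) + ∑ i ∈ Finset.range m,
        (-(gbinom q m i * ∏ k ∈ Finset.Icc (i + 1) m, (q ^ k + 1))) *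
          (∑ j ∈ Finset.range (i + 1),
            (-1 : ℝ) ^ (i - j) * q ^ ((i - j) * (i - j - 1) / 2) * gbinom q i j *
              (∏ k ∈ Finset.Icc (j + 1) i, (q ^ k + 1)) * q ^ ((2 * j + 1) * N))
      = ∑ i ∈ Finset.range (m + 1),
        (-1 : ℝ) ^ (m - i) * q ^ ((m - i) * (m - i - 1) / 2) * gbinom q m i *
          (∏ k ∈ Finset.Icc (i + 1) m, (q ^ k + 1)) * q ^ ((2 * i + 1) * N) := by
  rw [Finset.sum_range_succ, Nat.sub_self]
  rw [show ((0 : ℕ) * (0 - 1) / 2) = 0 from rfl, pow_zero, pow_zero, gbinom_self hq,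
    Finset.Icc_add_one_left_eq_Ioc, Finset.Ioc_self, Finset.prod_empty]
  rw [one_mul, one_mul, one_mul, one_mul]
  have main : ∑ i ∈ Finset.range m,
        (-(gbinom q m i * ∏ k ∈ Finset.Icc (i + 1) m, (q ^ k + 1))) *
          (∑ j ∈ Finset.range (i + 1),
            (-1 : ℝ) ^ (i - j) * q ^ ((i - j) * (i - j - 1) / 2) * gbinom q i j *
              (∏ k ∈ Finset.Icc (j + 1) i, (q ^ k + 1)) * q ^ ((2 * j + 1) * N))
      = ∑ i ∈ Finset.range m,
        (-1 : ℝ) ^ (m - i) * q ^ ((m - i) * (m - i - 1) / 2) * gbinom q m i *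
          (∏ k ∈ Finset.Icc (i + 1) m, (q ^ k + 1)) * q ^ ((2 * i + 1) * N) := by
    calc
      ∑ i ∈ Finset.range m,
        (-(gbinom q m i * ∏ k ∈ Finset.Icc (i + 1) m, (q ^ k + 1))) *
          (∑ j ∈ Finset.range (i + 1),
            (-1 : ℝ) ^ (i - j) * q ^ ((i - j) * (i - j - 1) / 2) * gbinom q i j *
              (∏ k ∈ Finset.Icc (j + 1) i, (q ^ k + 1)) * q ^ ((2 * j + 1) * N))
        = ∑ i ∈ Finset.Ico 0 m, ∑ j ∈ Finset.Ico 0 (i + 1),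
            (-(gbinom q m i * ∏ k ∈ Finset.Icc (i + 1) m, (q ^ k + 1))) *
            ((-1 : ℝ) ^ (i - j) * q ^ ((i - j) * (i - j - 1) / 2) * gbinom q i j *
              (∏ k ∈ Finset.Icc (j + 1) i, (q ^ k + 1)) * q ^ ((2 * j + 1) * N)) := by
          rw [Finset.range_eq_Ico]
          exact Finset.sum_congr rfl fun i _ => by rw [Finset.range_eq_Ico]; exact Finset.mul_sum _ _ _
      _ = ∑ j ∈ Finset.Ico 0 m, ∑ i ∈ Finset.Ico j m,
            (-(gbinom q m i * ∏ k ∈ Finset.Icc (i + 1) m, (q ^ k + 1))) *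
            ((-1 : ℝ) ^ (i - j) * q ^ ((i - j) * (i - j - 1) / 2) * gbinom q i j *
              (∏ k ∈ Finset.Icc (j + 1) i, (q ^ k + 1)) * q ^ ((2 * j + 1) * N)) :=
          (Finset.sum_Ico_Ico_comm 0 m fun i j =>
            (-(gbinom q m j * ∏ k ∈ Finset.Icc (j + 1) m, (q ^ k + 1))) *
            ((-1 : ℝ) ^ (j - i) * q ^ ((j - i) * (j - i - 1) / 2) * gbinom q j i *
              (∏ k ∈ Finset.Icc (i + 1) j, (q ^ k + 1)) * q ^ ((2 * i + 1) * N))).symm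
      _ = ∑ j ∈ Finset.range m,
            (-1 : ℝ) ^ (m - j) * q ^ ((m - j) * (m - j - 1) / 2) * gbinom q m j *
              (∏ k ∈ Finset.Icc (j + 1) m, (q ^ k + 1)) * q ^ ((2 * j + 1) * N) := by
          rw [Finset.range_eq_Ico]
          refine Finset.sum_congr rfl fun j hj => ?_
          have hjm : j < m := (Finset.mem_Ico.mp hj).2
          have step1 : ∀ i ∈ Finset.Ico j m,
              (-(gbinom q m i * ∏ k ∈ Finset.Icc (i + 1) m, (q ^ k + 1))) *
              ((-1 : ℝ) ^ (i - j) * q ^ ((i - j) * (i - j - 1) / 2) * gbinom q i j *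
                (∏ k ∈ Finset.Icc (j + 1) i, (q ^ k + 1)) * q ^ ((2 * j + 1) * N))
              = (-(gbinom q m j * (∏ k ∈ Finset.Icc (j + 1) m, (q ^ k + 1)) *
                    q ^ ((2 * j + 1) * N))) *
                ((-1 : ℝ) ^ (i - j) * q ^ ((i - j) * (i - j - 1) / 2) *
                  gbinom q (m - j) (i - j)) := by
            intro i hi
            have hji : j ≤ i := (Finset.mem_Ico.mp hi).1
            have him : i < m := (Finset.mem_Ico.mp hi).2
            have h1 := comb hq hji (le_of_lt him)
            have h2 := prodcomb (q := q) hji (le_of_lt him)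
            rw [← h2]
            linear_combination (-((-1 : ℝ) ^ (i - j) * q ^ ((i - j) * (i - j - 1) / 2) *
              q ^ ((2 * j + 1) * N) *
              ((∏ k ∈ Finset.Icc (i + 1) m, (q ^ k + 1)) *
                ∏ k ∈ Finset.Icc (j + 1) i, (q ^ k + 1)))) * h1
          rw [Finset.sum_congr rfl step1, ← Finset.mul_sum, Finset.sum_Ico_eq_sum_range]
          simp only [Nat.add_sub_cancel_left]
          rw [alt_sum' hq (by omega : 1 ≤ m - j)]
          ring
  rw [main]
  ring

theorem stmt0 (q : ℝ) (hq : 1 < q) (N : ℕ) (X : ℕ → ℝ)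
    (hX : ∀ m : ℕ, X m = q ^ ((2 * m + 1) * N) +
      ∑ i ∈ Finset.range m,
        (-(gbinom q m i * ∏ k ∈ Finset.Icc (i + 1) m, (q ^ k + 1))) * X i) :
    ∀ m : ℕ, X m = ∑ i ∈ Finset.range (m + 1),
      (-1 : ℝ) ^ (m - i) * q ^ ((m - i) * (m - i - 1) / 2) * gbinom q m i *
        (∏ k ∈ Finset.Icc (i + 1) m, (q ^ k + 1)) * q ^ ((2 * i + 1) * N) := by
  intro m
  induction m using Nat.strong_induction_on with
  | _ m ih =>
    rw [hX m]
    rw [Finset.sum_congr rfl fun i hi => by rw [ih i (Finset.mem_range.mp hi)]]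
    exact key hq N m
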